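/- Let k : ℝ^d × ℝ^d → ℝ be a symmetric kernel that is Lipschitz continuous in each argument, i.e. there exists L > 0 with |k(x,y) − k(x',y)| ≤ L‖x − x'‖ for all x, x', y. Let (z_m)_{m=1}^∞ be a sequence of points in ℝ^d, and for each M let K^{(M)} be the M×M matrix with entries k(z_i, z_j) for 1 ≤ i, j ≤ M; assume each K^{(M)} is symmetric positive definite. If there exists C > 0 such that cond(K^{(M)}) ≤ C for all M, then the sequence (z_m) satisfies minimum separation: there exists δ > 0 such that ‖z_i − z_j‖ ≥ δ for all i ≠ j. -/

import Mathlib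

open Matrix
lemma spectral_quad {M : ℕ} (A : Matrix (Fin M) (Fin M) ℝ) (hA : A.IsHermitian)
    (v : Fin M → ℝ) :
    v ⬝ᵥ (A *ᵥ v) =
      ∑ t, hA.eigenvalues t *
        ((star (hA.eigenvectorUnitary : Matrix (Fin M) (Fin M) ℝ) *ᵥ v) t) ^ 2 ∧
    v ⬝ᵥ v = ∑ t, ((star (hA.eigenvectorUnitary : Matrix (Fin M) (Fin M) ℝ) *ᵥ v) t) ^ 2 := by
  set U : Matrix (Fin M) (Fin M) ℝ := (hA.eigenvectorUnitary : Matrix (Fin M) (Fin M) ℝ) with hU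
  set w : Fin M → ℝ := star U *ᵥ v with hw
  have hUsU : U * star U = 1 := Unitary.coe_mul_star_self _
  have hvstar : v ᵥ* U = w := by
    rw [hw, star_eq_conjTranspose, conjTranspose_eq_transpose_of_trivial, mulVec_transpose]
  constructor
  · conv_lhs => rw [hA.spectral_theorem, Unitary.conjStarAlgAut_apply]
    rw [← mulVec_mulVec, ← mulVec_mulVec, dotProduct_mulVec, hvstar, ← hw]
    simp only [mulVec_diagonal, dotProduct, Function.comp_apply, RCLike.ofReal_real_eq_id, id_eq]
    exact Finset.sum_congr rfl fun t _ => by ring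
  · have h1 : U *ᵥ w = v := by rw [hw, mulVec_mulVec, hUsU, one_mulVec]
    have h2 : v ⬝ᵥ v = v ᵥ* U ⬝ᵥ w := by rw [← dotProduct_mulVec, h1]
    rw [h2, hvstar]
    simp only [dotProduct]
    exact Finset.sum_congr rfl fun t _ => by ring



/-- If `k` is a symmetric, Lipschitz (in each argument) kernel on `ℝ^d`,
`(z_m)` a sequence of points whose kernel matrices `K^{(M)} = (k(z_i, z_j))_{i,j < M}` are all
positive definite with uniformly bounded condition number, then the sequence `(z_m)`
satisfies minimum separation. -/
theorem separation_necessary_for_bounded_condition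
    (d : ℕ) (k : EuclideanSpace ℝ (Fin d) → EuclideanSpace ℝ (Fin d) → ℝ)
    (L : ℝ) (hL : 0 < L)
    (hk_symm : ∀ x y, k x y = k y x)
    (hk_lip : ∀ x x' y, |k x y - k x' y| ≤ L * ‖x - x'‖)
    (z : ℕ → EuclideanSpace ℝ (Fin d))
    (K : (M : ℕ) → Matrix (Fin M) (Fin M) ℝ)
    (hKdef : ∀ (M : ℕ) (i j : Fin M), K M i j = k (z i) (z j))
    (hKpd : ∀ M, (K M).PosDef)
    (hKherm : ∀ M, (K M).IsHermitian)
    (C : ℝ) (hC : 0 < C)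
    (hcond : ∀ M, 0 < M →
      (⨆ i, (hKherm M).eigenvalues i) / (⨅ i, (hKherm M).eigenvalues i) ≤ C) :
    ∃ δ > 0, ∀ i j : ℕ, i ≠ j → δ ≤ ‖z i - z j‖ := by
  classical
  set a : ℝ := k (z 0) (z 0) with ha
  have ha_pos : 0 < a := by
    have h0 : (fun _ : Fin 1 => (1 : ℝ)) ≠ 0 := by
      intro h
      have := congrFun h 0
      norm_num at this
    have h1 := (hKpd 1).dotProduct_mulVec_pos h0
    simpa [dotProduct, Matrix.mulVec, hKdef] using h1
  refine ⟨a / (C * L), div_pos ha_pos (mul_pos hC hL), ?_⟩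
  intro i j hij
  set M := max i j + 1 with hM
  have hiM : i < M := Nat.lt_succ_of_le (le_max_left _ _)
  have hjM : j < M := Nat.lt_succ_of_le (le_max_right _ _)
  set i' : Fin M := ⟨i, hiM⟩ with hi'
  set j' : Fin M := ⟨j, hjM⟩ with hj'
  have hij' : i' ≠ j' := by simp [hi', hj', Fin.ext_iff, hij]
  set μ : Fin M → ℝ := (hKherm M).eigenvalues with hμ
  have hμpos : ∀ t, 0 < μ t := fun t => (hKpd M).eigenvalues_pos t
  have hbddA : BddAbove (Set.range μ) := (Set.finite_range μ).bddAbove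
  have hbddB : BddBelow (Set.range μ) := (Set.finite_range μ).bddBelow
  have hne : Nonempty (Fin M) := ⟨⟨0, Nat.succ_pos _⟩⟩
  have hinfpos : 0 < ⨅ t, μ t := by
    obtain ⟨t0, ht0⟩ := Finite.exists_min μ
    exact lt_of_lt_of_le (hμpos t0) (le_ciInf ht0)
  -- sup bound : a ≤ ⨆ μ
  have hsup : a ≤ ⨆ t, μ t := by
    set u : Fin M → ℝ := Pi.single ⟨0, Nat.succ_pos _⟩ 1 with hu
    obtain ⟨h1, h2⟩ := spectral_quad (K M) (hKherm M) u
    have hqa : u ⬝ᵥ (K M *ᵥ u) = a := by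
      simp [hu, single_dotProduct, hKdef, ha]
    have huu : u ⬝ᵥ u = 1 := by
      simp [hu, single_dotProduct]
    calc a = ∑ t, μ t * ((star ((hKherm M).eigenvectorUnitary : Matrix (Fin M) (Fin M) ℝ) *ᵥ u) t) ^ 2 := by
            rw [← h1, hqa]
      _ ≤ ∑ t, (⨆ s, μ s) * ((star ((hKherm M).eigenvectorUnitary : Matrix (Fin M) (Fin M) ℝ) *ᵥ u) t) ^ 2 := by
            refine Finset.sum_le_sum fun t _ => ?_
            exact mul_le_mul_of_nonneg_right (le_ciSup hbddA t) (sq_nonneg _)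
      _ = (⨆ s, μ s) * (u ⬝ᵥ u) := by rw [← Finset.mul_sum, h2]
      _ = ⨆ s, μ s := by rw [huu, mul_one]
  -- inf bound : ⨅ μ ≤ L * ‖z i - z j‖
  have hinf_le : (⨅ t, μ t) ≤ L * ‖z i - z j‖ := by
    set v : Fin M → ℝ := Pi.single i' 1 - Pi.single j' 1 with hv
    obtain ⟨g1, g2⟩ := spectral_quad (K M) (hKherm M) v
    have hvv : v ⬝ᵥ v = 2 := by
      simp [hv, sub_dotProduct, dotProduct_sub, single_dotProduct,
        Pi.single_eq_of_ne hij', Pi.single_eq_of_ne hij'.symm]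
      norm_num
    have hexp : v ⬝ᵥ (K M *ᵥ v)
        = k (z i) (z i) - k (z j) (z i) + (k (z j) (z j) - k (z i) (z j)) := by
      have e1 : K M i' i' = k (z i) (z i) := hKdef M i' i'
      have e2 : K M i' j' = k (z i) (z j) := hKdef M i' j'
      have e3 : K M j' i' = k (z j) (z i) := hKdef M j' i'
      have e4 : K M j' j' = k (z j) (z j) := hKdef M j' j'
      simp [hv, Matrix.mulVec_sub, dotProduct_sub, sub_dotProduct,
        single_dotProduct, Matrix.mulVec_single, Pi.sub_apply, e1, e2, e3, e4]
      ring
    have habs1 : |k (z i) (z i) - k (z j) (z i)| ≤ L * ‖z i - z j‖ := hk_lip (z i) (z j) (z i)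
    have habs2 : |k (z j) (z j) - k (z i) (z j)| ≤ L * ‖z i - z j‖ := by
      have := hk_lip (z j) (z i) (z j)
      rwa [norm_sub_rev] at this
    have hquadv : v ⬝ᵥ (K M *ᵥ v) ≤ 2 * (L * ‖z i - z j‖) := by
      rw [hexp]
      have a1 := abs_le.1 habs1
      have a2 := abs_le.1 habs2
      linarith [a1.2, a2.2]
    have key : (⨅ t, μ t) * 2 ≤ 2 * (L * ‖z i - z j‖) := by
      calc (⨅ t, μ t) * 2 = (⨅ t, μ t) * (v ⬝ᵥ v) := by rw [hvv]
        _ = ∑ t, (⨅ s, μ s) * ((star ((hKherm M).eigenvectorUnitary : Matrix (Fin M) (Fin M) ℝ) *ᵥ v) t) ^ 2 := by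
            rw [g2, Finset.mul_sum]
        _ ≤ ∑ t, μ t * ((star ((hKherm M).eigenvectorUnitary : Matrix (Fin M) (Fin M) ℝ) *ᵥ v) t) ^ 2 := by
            refine Finset.sum_le_sum fun t _ => ?_
            exact mul_le_mul_of_nonneg_right (ciInf_le hbddB t) (sq_nonneg _)
        _ = v ⬝ᵥ (K M *ᵥ v) := g1.symm
        _ ≤ 2 * (L * ‖z i - z j‖) := hquadv
    linarith
  have hcond' := hcond M (Nat.succ_pos _)
  have hsup_le : (⨆ t, μ t) ≤ C * ⨅ t, μ t := (div_le_iff₀ hinfpos).1 hcond'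
  have hfinal : a ≤ C * (L * ‖z i - z j‖) :=
    le_trans (hsup.trans hsup_le) (mul_le_mul_of_nonneg_left hinf_le hC.le)
  rw [div_le_iff₀ (mul_pos hC hL)]
  nlinarith [hfinal]
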